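/- Let s(ξ₀, ξ₁, ξ₂, x₁, x₂) = ξ₀³ + ξ₁³(x₁ − 1) + ξ₂³(x₂ − 2). Then for every (ξ, x) = (ξ₀, ξ₁, ξ₂, x₁, x₂) with (ξ₀, ξ₁, ξ₂) ≠ (0,0,0) and s(ξ, x) = 0, the gradient ∇s(ξ, x) = (∂s/∂ξ₀, ∂s/∂ξ₁, ∂s/∂ξ₂, ∂s/∂x₁, ∂s/∂x₂) ∈ ℂ⁵ is not a complex scalar multiple of the Euler vector (ξ₀, ξ₁, ξ₂, 0, 0). -/

import Mathlib

/-- Example C: `s(ξ₀,ξ₁,ξ₂,x₁,x₂) = ξ₀³ + ξ₁³(x₁−1) + ξ₂³(x₂−2)`. -/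
noncomputable def exC_s (ξ₀ ξ₁ ξ₂ x₁ x₂ : ℂ) : ℂ :=
  ξ₀ ^ 3 + ξ₁ ^ 3 * (x₁ - 1) + ξ₂ ^ 3 * (x₂ - 2)

/-- The gradient `(∂s/∂ξ₀, ∂s/∂ξ₁, ∂s/∂ξ₂, ∂s/∂x₁, ∂s/∂x₂) ∈ ℂ⁵`. -/
noncomputable def exC_grad (ξ₀ ξ₁ ξ₂ x₁ x₂ : ℂ) : Fin 5 → ℂ :=
  ![deriv (fun t => exC_s t ξ₁ ξ₂ x₁ x₂) ξ₀,
    deriv (fun t => exC_s ξ₀ t ξ₂ x₁ x₂) ξ₁,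
    deriv (fun t => exC_s ξ₀ ξ₁ t x₁ x₂) ξ₂,
    deriv (fun t => exC_s ξ₀ ξ₁ ξ₂ t x₂) x₁,
    deriv (fun t => exC_s ξ₀ ξ₁ ξ₂ x₁ t) x₂]

lemma exC_grad3 (ξ₀ ξ₁ ξ₂ x₁ x₂ : ℂ) : exC_grad ξ₀ ξ₁ ξ₂ x₁ x₂ 3 = ξ₁ ^ 3 := by
  have : (fun t => exC_s ξ₀ ξ₁ ξ₂ t x₂) = fun t => ξ₀ ^ 3 + ξ₁ ^ 3 * (t - 1) + ξ₂ ^ 3 * (x₂ - 2) := rfl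
  simp only [exC_grad, Matrix.cons_val_three, Matrix.tail_cons, Matrix.head_cons, this]
  rw [deriv_fun_add, deriv_fun_add, deriv_const, deriv_const_mul, deriv_fun_sub, deriv_id'', deriv_const] <;>
    simp

lemma exC_grad4 (ξ₀ ξ₁ ξ₂ x₁ x₂ : ℂ) : exC_grad ξ₀ ξ₁ ξ₂ x₁ x₂ 4 = ξ₂ ^ 3 := by
  have : (fun t => exC_s ξ₀ ξ₁ ξ₂ x₁ t) = fun t => (ξ₀ ^ 3 + ξ₁ ^ 3 * (x₁ - 1)) + ξ₂ ^ 3 * (t - 2) := by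
    rfl
  simp only [exC_grad, Matrix.cons_val_four, Matrix.tail_cons, Matrix.head_cons, this]
  rw [deriv_fun_add, deriv_const, deriv_const_mul, deriv_fun_sub, deriv_id'', deriv_const] <;>
    simp

/-- At every zero of `s` with `(ξ₀,ξ₁,ξ₂) ≠ 0`, the gradient of `s` is not a complex scalar
multiple of the Euler vector `(ξ₀,ξ₁,ξ₂,0,0)` (smoothness of `S` in Example C). -/
theorem exampleC_S_smooth (ξ₀ ξ₁ ξ₂ x₁ x₂ : ℂ) (hξ : (ξ₀, ξ₁, ξ₂) ≠ (0, 0, 0))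
    (hs : exC_s ξ₀ ξ₁ ξ₂ x₁ x₂ = 0) :
    ∀ c : ℂ, exC_grad ξ₀ ξ₁ ξ₂ x₁ x₂ ≠ c • ![ξ₀, ξ₁, ξ₂, 0, 0] := by
  intro c h
  have h3 := congrFun h 3
  have h4 := congrFun h 4
  rw [exC_grad3] at h3
  rw [exC_grad4] at h4
  simp [Pi.smul_apply] at h3 h4
  have h1 : ξ₁ = 0 := h3
  have h2 : ξ₂ = 0 := h4
  have h0 : ξ₀ = 0 := by
    have : ξ₀ ^ 3 = 0 := by simpa [exC_s, h1, h2] using hs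
    exact pow_eq_zero_iff (by norm_num) |>.mp this
  exact hξ (by simp [h0, h1, h2])
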